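/- Let r_u, r_v ∈ ℝ and μ_u, μ_v > 0. The function λ₁(α) := (1/2)·(r_u − α μ_u + r_v − α μ_v + √((r_u − α μ_u − (r_v − α μ_v))² + 4 α² μ_u μ_v)) converges, as α → +∞, to the weighted average (μ_v/(μ_u+μ_v)) r_u + (μ_u/(μ_u+μ_v)) r_v. -/

import Mathlib

/-- As α → +∞, λ₁(α) converges to the weighted average
(μ_v/(μ_u+μ_v)) r_u + (μ_u/(μ_u+μ_v)) r_v. -/
theorem stmt8 (ru rv μu μv : ℝ) (hμu : 0 < μu) (hμv : 0 < μv) :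
    Filter.Tendsto (fun α : ℝ =>
      (1 / 2) * (ru - α * μu + rv - α * μv +
        Real.sqrt ((ru - α * μu - (rv - α * μv)) ^ 2 + 4 * α ^ 2 * μu * μv)))
      Filter.atTop
      (nhds ((μv / (μu + μv)) * ru + (μu / (μu + μv)) * rv)) := by
  have hsum : 0 < μu + μv := by linarith
  set f : ℝ → ℝ := fun t => (ru + rv) / 2 +
    (t * (ru - rv) ^ 2 - 2 * (ru - rv) * (μu - μv)) /
      (2 * (Real.sqrt ((t * (ru - rv) - (μu - μv)) ^ 2 + 4 * μu * μv) + (μu + μv)))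
    with hfdef
  have hcont : ContinuousAt f 0 := by
    apply ContinuousAt.add continuousAt_const
    apply ContinuousAt.div (by fun_prop) (by fun_prop)
    have : 0 ≤ Real.sqrt ((0 * (ru - rv) - (μu - μv)) ^ 2 + 4 * μu * μv) :=
      Real.sqrt_nonneg _
    positivity
  have hf0 : f 0 = (μv / (μu + μv)) * ru + (μu / (μu + μv)) * rv := by
    have h1 : (0 * (ru - rv) - (μu - μv)) ^ 2 + 4 * μu * μv = (μu + μv) ^ 2 := by ring
    simp only [hfdef, h1, Real.sqrt_sq hsum.le]
    field_simp
    ring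
  have hconv : Filter.Tendsto (fun α : ℝ => f α⁻¹) Filter.atTop
      (nhds ((μv / (μu + μv)) * ru + (μu / (μu + μv)) * rv)) := by
    rw [← hf0]
    exact hcont.tendsto.comp tendsto_inv_atTop_zero
  refine hconv.congr' ?_
  filter_upwards [Filter.eventually_gt_atTop 0] with α hα
  set Q := Real.sqrt ((α⁻¹ * (ru - rv) - (μu - μv)) ^ 2 + 4 * μu * μv) with hQdef
  have hQ0 : 0 ≤ Q := Real.sqrt_nonneg _
  have hQsq : Q ^ 2 = (α⁻¹ * (ru - rv) - (μu - μv)) ^ 2 + 4 * μu * μv :=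
    Real.sq_sqrt (by positivity)
  have hR : Real.sqrt ((ru - α * μu - (rv - α * μv)) ^ 2 + 4 * α ^ 2 * μu * μv)
      = α * Q := by
    have h2 : (ru - α * μu - (rv - α * μv)) ^ 2 + 4 * α ^ 2 * μu * μv
        = α ^ 2 * ((α⁻¹ * (ru - rv) - (μu - μv)) ^ 2 + 4 * μu * μv) := by
      field_simp
      ring
    rw [h2, Real.sqrt_mul (sq_nonneg α), Real.sqrt_sq hα.le, hQdef]
  have hd : Q + (μu + μv) ≠ 0 := by positivity
  simp only [hfdef, hR]
  rw [← hQdef]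
  have hα' : α ≠ 0 := hα.ne'
  have hQsq' : α ^ 2 * Q ^ 2 = (ru - rv - α * (μu - μv)) ^ 2 + 4 * α ^ 2 * μu * μv := by
    rw [hQsq]
    field_simp
  field_simp
  linear_combination (-1) * hQsq'
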